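/- For any topological space Y, the pair (ℕ × 2^ω, Y) satisfies UU if and only if the pair (2^ω, Y) satisfies UU, where ℕ carries the discrete topology and ℕ × 2^ω the product topology. -/

import Mathlib

/-- The pair (X, Y) satisfies UU: there is an open set `U ⊆ X × Y` such that
every open `W ⊆ Y` is the cross section `{y | (x, y) ∈ U}` for exactly one `x`. -/
def UU (X Y : Type*) [TopologicalSpace X] [TopologicalSpace Y] : Prop :=
  ∃ U : Set (X × Y), IsOpen U ∧
    ∀ W : Set Y, IsOpen W → ∃! x : X, {y | (x, y) ∈ U} = W

abbrev Cs : Type := ℕ → Bool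

/-- the sequence `0^m 1 x` -/
def zo (m : ℕ) (x : Cs) : Cs := fun i =>
  if i < m then false else if i = m then true else x (i - (m + 1))

/-- the sequence `1^m 0 x` -/
def ons (m : ℕ) (x : Cs) : Cs := fun i =>
  if i < m then true else if i = m then false else x (i - (m + 1))

def drp (m : ℕ) (x : Cs) : Cs := fun i => x (i + m)

def xadd (a b : Cs) : Cs := fun i => xor (a i) (b i)

lemma zo_lt {m i : ℕ} (x : Cs) (h : i < m) : zo m x i = false := by simp [zo, h]
lemma zo_self (m : ℕ) (x : Cs) : zo m x m = true := by simp [zo]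
lemma ons_lt {m i : ℕ} (x : Cs) (h : i < m) : ons m x i = true := by simp [ons, h]
lemma ons_self (m : ℕ) (x : Cs) : ons m x m = false := by simp [ons]

lemma drp_zo (m : ℕ) (x : Cs) : drp (m + 1) (zo m x) = x := funext fun i => by
  simp only [drp, zo]
  rw [if_neg (by omega), if_neg (by omega)]
  congr 1; omega

lemma drp_ons (m : ℕ) (x : Cs) : drp (m + 1) (ons m x) = x := funext fun i => by
  simp only [drp, ons]
  rw [if_neg (by omega), if_neg (by omega)]
  congr 1; omega

lemma zo_recover {m : ℕ} {c : Cs} (h1 : ∀ i < m, c i = false) (h2 : c m = true) :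
    zo m (drp (m + 1) c) = c := funext fun i => by
  simp only [zo, drp]
  split_ifs with ha hb
  · exact (h1 i ha).symm
  · rw [hb]; exact h2.symm
  · congr 1; omega

lemma ons_recover {m : ℕ} {c : Cs} (h1 : ∀ i < m, c i = true) (h2 : c m = false) :
    ons m (drp (m + 1) c) = c := funext fun i => by
  simp only [ons, drp]
  split_ifs with ha hb
  · exact (h1 i ha).symm
  · rw [hb]; exact h2.symm
  · congr 1; omega

lemma find_zo (m : ℕ) (x : Cs) (h : ∃ i, zo m x i = true) : Nat.find h = m :=
  (Nat.find_eq_iff h).2 ⟨zo_self m x, fun k hk => by simp [zo_lt x hk]⟩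

lemma find_ons (m : ℕ) (x : Cs) (h : ∃ i, ons m x i = false) : Nat.find h = m :=
  (Nat.find_eq_iff h).2 ⟨ons_self m x, fun k hk => by simp [ons_lt x hk]⟩

lemma xadd_xadd (a b : Cs) : xadd (xadd a b) b = a := funext fun i => by
  cases h : a i <;> cases h2 : b i <;> simp [xadd, h, h2]

/-- a function of sequences depending only on the first `N` coordinates is continuous -/
lemma cont_of_dep (N : ℕ) (f : Cs → Bool)
    (hf : ∀ x y : Cs, (∀ j, j < N → x j = y j) → f x = f y) : Continuous f := by
  have hrw : f = (fun v : Fin N → Bool => f (fun j => if h : j < N then v ⟨j, h⟩ else false)) ∘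
      (fun x : Cs => (fun j : Fin N => x j)) := by
    funext x
    exact hf x _ (fun j hj => by simp [hj])
  rw [hrw]
  exact continuous_of_discreteTopology.comp (continuous_pi fun j => continuous_apply _)

lemma isOpen_Pc (m : ℕ) : IsOpen {c : Cs | (∀ i < m, c i = false) ∧ c m = true} := by
  have h : {c : Cs | (∀ i < m, c i = false) ∧ c m = true} =
      (fun c : Cs => (fun j : Fin (m + 1) => c j)) ⁻¹'
        {v : Fin (m + 1) → Bool |
          (∀ i, ∀ _ : i < m, v ⟨i, by omega⟩ = false) ∧ v ⟨m, by omega⟩ = true} := by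
    ext c
    constructor
    · rintro ⟨h1, h2⟩; exact ⟨fun i hi => h1 i hi, h2⟩
    · rintro ⟨h1, h2⟩; exact ⟨fun i hi => h1 i hi, h2⟩
  rw [h]
  exact (isOpen_discrete _).preimage (continuous_pi fun j => continuous_apply _)

/-! ### the forward map: from `Cs` to `ℕ × Cs` -/

def lamP (n₀ : ℕ) (x₀ : Cs) (m : ℕ) (c : Cs) : ℕ × Cs :=
  if m % 2 = 0 then (n₀, xadd (zo (m / 2) (drp (m + 1) c)) x₀)
  else (if m / 2 + 1 ≤ n₀ then m / 2 else m / 2 + 1, drp (m + 1) c)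

open Classical in
noncomputable def lam (n₀ : ℕ) (x₀ : Cs) (c : Cs) : ℕ × Cs :=
  if h : ∃ i, c i = true then lamP n₀ x₀ (Nat.find h) c else (n₀, x₀)

open Classical in
noncomputable def laminv (n₀ : ℕ) (x₀ : Cs) (p : ℕ × Cs) : Cs :=
  if p.1 = n₀ then
    (if h : ∃ i, xadd p.2 x₀ i = true then
       zo (2 * Nat.find h) (drp (Nat.find h + 1) (xadd p.2 x₀))
     else fun _ => false)
  else zo (2 * (if p.1 < n₀ then p.1 + 1 else p.1) - 1) p.2

lemma lam_pos (n₀ : ℕ) (x₀ : Cs) {c : Cs} (h : ∃ i, c i = true) :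
    lam n₀ x₀ c = lamP n₀ x₀ (Nat.find h) c := dif_pos h

lemma lam_neg (n₀ : ℕ) (x₀ : Cs) {c : Cs} (h : ¬ ∃ i, c i = true) :
    lam n₀ x₀ c = (n₀, x₀) := dif_neg h

lemma lam_laminv (n₀ : ℕ) (x₀ : Cs) (p : ℕ × Cs) : lam n₀ x₀ (laminv n₀ x₀ p) = p := by
  unfold laminv
  by_cases hp : p.1 = n₀
  · rw [if_pos hp]
    by_cases h : ∃ i, xadd p.2 x₀ i = true
    · rw [dif_pos h]
      have hex : ∃ i, zo (2 * Nat.find h) (drp (Nat.find h + 1) (xadd p.2 x₀)) i = true :=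
        ⟨2 * Nat.find h, zo_self _ _⟩
      rw [lam_pos n₀ x₀ hex, find_zo _ _ hex]
      unfold lamP
      rw [if_pos (by omega)]
      rw [drp_zo]
      have h2 : (2 * Nat.find h) / 2 = Nat.find h := by omega
      rw [h2]
      have h3 : zo (Nat.find h) (drp (Nat.find h + 1) (xadd p.2 x₀)) = xadd p.2 x₀ :=
        zo_recover (fun i hi => by simpa using Nat.find_min h hi) (Nat.find_spec h)
      rw [h3, xadd_xadd, ← hp]
    · rw [dif_neg h]
      rw [lam_neg n₀ x₀ (by simp)]
      have h2 : p.2 = x₀ := funext fun i => by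
        have h3 := not_exists.1 h i
        revert h3
        unfold xadd
        cases hpi : p.2 i <;> cases hxi : x₀ i <;> simp
      rw [← hp, ← h2]
  · rw [if_neg hp]
    have hj1 : 1 ≤ (if p.1 < n₀ then p.1 + 1 else p.1) := by split_ifs <;> omega
    have hex : ∃ i, zo (2 * (if p.1 < n₀ then p.1 + 1 else p.1) - 1) p.2 i = true :=
      ⟨2 * (if p.1 < n₀ then p.1 + 1 else p.1) - 1, zo_self _ _⟩
    rw [lam_pos n₀ x₀ hex, find_zo _ _ hex]
    unfold lamP
    rw [if_neg (by omega)]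
    rw [drp_zo]
    have h2 : ((if p.1 < n₀ then p.1 + 1 else p.1) : ℕ) - 1 =
        (2 * (if p.1 < n₀ then p.1 + 1 else p.1) - 1) / 2 := by omega
    have h3 : (if (2 * (if p.1 < n₀ then p.1 + 1 else p.1) - 1) / 2 + 1 ≤ n₀ then
        (2 * (if p.1 < n₀ then p.1 + 1 else p.1) - 1) / 2
        else (2 * (if p.1 < n₀ then p.1 + 1 else p.1) - 1) / 2 + 1) = p.1 := by
      split_ifs with h4 h5 h5 <;> omega
    rw [h3]

lemma laminv_lam (n₀ : ℕ) (x₀ : Cs) (c : Cs) : laminv n₀ x₀ (lam n₀ x₀ c) = c := by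
  by_cases h : ∃ i, c i = true
  · rw [lam_pos n₀ x₀ h]
    have hmin : ∀ i < Nat.find h, c i = false := fun i hi => by simpa using Nat.find_min h hi
    have hms : c (Nat.find h) = true := Nat.find_spec h
    unfold lamP
    by_cases hpar : Nat.find h % 2 = 0
    · rw [if_pos hpar]
      unfold laminv
      rw [if_pos rfl]
      have hsnd : (n₀, xadd (zo (Nat.find h / 2) (drp (Nat.find h + 1) c)) x₀).2 =
          xadd (zo (Nat.find h / 2) (drp (Nat.find h + 1) c)) x₀ := rfl
      rw [hsnd, xadd_xadd]
      have hex : ∃ i, zo (Nat.find h / 2) (drp (Nat.find h + 1) c) i = true :=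
        ⟨Nat.find h / 2, zo_self _ _⟩
      rw [dif_pos hex, find_zo _ _ hex, drp_zo]
      have h2 : 2 * (Nat.find h / 2) = Nat.find h := by omega
      rw [h2]
      exact zo_recover hmin hms
    · rw [if_neg hpar]
      unfold laminv
      have hfst : ((if Nat.find h / 2 + 1 ≤ n₀ then Nat.find h / 2 else Nat.find h / 2 + 1,
          drp (Nat.find h + 1) c) : ℕ × Cs).1 =
          (if Nat.find h / 2 + 1 ≤ n₀ then Nat.find h / 2 else Nat.find h / 2 + 1) := rfl
      have hne : ((if Nat.find h / 2 + 1 ≤ n₀ then Nat.find h / 2 else Nat.find h / 2 + 1 :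
          ℕ)) ≠ n₀ := by split_ifs <;> omega
      rw [if_neg (by rw [hfst]; exact hne)]
      have h2 : 2 * (if ((if Nat.find h / 2 + 1 ≤ n₀ then Nat.find h / 2 else
          Nat.find h / 2 + 1, drp (Nat.find h + 1) c) : ℕ × Cs).1 < n₀ then
          ((if Nat.find h / 2 + 1 ≤ n₀ then Nat.find h / 2 else Nat.find h / 2 + 1,
          drp (Nat.find h + 1) c) : ℕ × Cs).1 + 1
          else ((if Nat.find h / 2 + 1 ≤ n₀ then Nat.find h / 2 else Nat.find h / 2 + 1,
          drp (Nat.find h + 1) c) : ℕ × Cs).1) - 1 = Nat.find h := by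
        simp only [hfst]
        split_ifs <;> omega
      rw [h2]
      exact zo_recover hmin hms
  · rw [lam_neg n₀ x₀ h]
    unfold laminv
    rw [if_pos rfl]
    have h1 : ¬ ∃ i, xadd ((n₀, x₀) : ℕ × Cs).2 x₀ i = true := by
      rintro ⟨i, hi⟩
      simp [xadd] at hi
    rw [dif_neg h1]
    funext i
    have := not_exists.1 h i
    simp only [Bool.not_eq_true] at this
    exact this.symm

lemma cont_lamP (n₀ : ℕ) (x₀ : Cs) (m : ℕ) : Continuous (lamP n₀ x₀ m) := by
  by_cases hpar : m % 2 = 0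
  · unfold lamP
    simp only [if_pos hpar]
    refine continuous_const.prodMk ?_
    refine continuous_pi fun i => cont_of_dep (i + m + 2) _ fun x y hxy => ?_
    simp only [xadd, zo, drp]
    split_ifs with h1 h2
    · rfl
    · rfl
    · rw [hxy _ (by omega)]
  · unfold lamP
    simp only [if_neg hpar]
    refine continuous_const.prodMk ?_
    refine continuous_pi fun i => cont_of_dep (i + m + 2) _ fun x y hxy => ?_
    simp only [drp]
    rw [hxy _ (by omega)]

/-! ### the backward map: from `ℕ × Cs` to `Cs` -/

open Classical in
noncomputable def g0 (x : Cs) : Cs :=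
  if h : ∃ i, x i = false then zo (2 * Nat.find h + 1) (drp (Nat.find h + 1) x)
  else fun _ => false

noncomputable def hmapn (n : ℕ) (x : Cs) : Cs :=
  if n = 0 then g0 x else zo (2 * (n - 1)) x

open Classical in
noncomputable def hinv (c : Cs) : ℕ × Cs :=
  if h : ∃ i, c i = true then
    (if Nat.find h % 2 = 0 then (Nat.find h / 2 + 1, drp (Nat.find h + 1) c)
     else (0, ons (Nat.find h / 2) (drp (Nat.find h + 1) c)))
  else (0, fun _ => true)

lemma hmap_hinv (c : Cs) : hmapn (hinv c).1 (hinv c).2 = c := by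
  by_cases h : ∃ i, c i = true
  · have hms : c (Nat.find h) = true := Nat.find_spec h
    have hmin : ∀ i < Nat.find h, c i = false := fun i hi => by simpa using Nat.find_min h hi
    unfold hinv
    rw [dif_pos h]
    by_cases hpar : Nat.find h % 2 = 0
    · rw [if_pos hpar]
      unfold hmapn
      rw [if_neg (by simp)]
      have h2 : 2 * ((Nat.find h / 2 + 1, drp (Nat.find h + 1) c).1 - 1) = Nat.find h := by
        simp only []
        omega
      rw [h2]
      exact zo_recover hmin hms
    · rw [if_neg hpar]
      unfold hmapn
      rw [if_pos rfl]
      unfold g0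
      have hex : ∃ i, ons (Nat.find h / 2) (drp (Nat.find h + 1) c) i = false :=
        ⟨Nat.find h / 2, ons_self _ _⟩
      rw [dif_pos hex, find_ons _ _ hex, drp_ons]
      have h2 : 2 * (Nat.find h / 2) + 1 = Nat.find h := by omega
      rw [h2]
      exact zo_recover hmin hms
  · unfold hinv
    rw [dif_neg h]
    unfold hmapn
    rw [if_pos rfl]
    unfold g0
    have h1 : ¬ ∃ i, ((0, fun _ => true) : ℕ × Cs).2 i = false := by simp
    rw [dif_neg h1]
    funext i
    have := not_exists.1 h i
    simp only [Bool.not_eq_true] at this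
    exact this.symm

lemma hinv_hmap (p : ℕ × Cs) : hinv (hmapn p.1 p.2) = p := by
  obtain ⟨n, x⟩ := p
  simp only []
  unfold hmapn
  by_cases hn : n = 0
  · subst hn
    rw [if_pos rfl]
    unfold g0
    by_cases h : ∃ i, x i = false
    · rw [dif_pos h]
      have hex : ∃ i, zo (2 * Nat.find h + 1) (drp (Nat.find h + 1) x) i = true :=
        ⟨2 * Nat.find h + 1, zo_self _ _⟩
      unfold hinv
      rw [dif_pos hex, find_zo _ _ hex, if_neg (by omega), drp_zo]
      have h2 : (2 * Nat.find h + 1) / 2 = Nat.find h := by omega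
      rw [h2]
      have h3 : ons (Nat.find h) (drp (Nat.find h + 1) x) = x :=
        ons_recover (fun i hi => by simpa using Nat.find_min h hi) (Nat.find_spec h)
      rw [h3]
    · rw [dif_neg h]
      unfold hinv
      have h1 : ¬ ∃ i, (fun _ => false : Cs) i = true := by simp
      rw [dif_neg h1]
      have h2 : (fun _ => true : Cs) = x := funext fun i => by
        have := not_exists.1 h i
        simp only [Bool.not_eq_false] at this
        exact this.symm
      rw [h2]
  · rw [if_neg hn]
    have hex : ∃ i, zo (2 * (n - 1)) x i = true := ⟨2 * (n - 1), zo_self _ _⟩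
    unfold hinv
    rw [dif_pos hex, find_zo _ _ hex, if_pos (by omega), drp_zo]
    have h2 : 2 * (n - 1) / 2 + 1 = n := by omega
    rw [h2]

lemma g0_dep (i : ℕ) (x y : Cs) (hxy : ∀ j, j < i + 1 → x j = y j) : g0 x i = g0 y i := by
  unfold g0
  by_cases hx : ∃ j, x j = false
  · by_cases hk : Nat.find hx ≤ i
    · have hy : ∃ j, y j = false :=
        ⟨Nat.find hx, by rw [← hxy _ (by omega)]; exact Nat.find_spec hx⟩
      have hfy : Nat.find hy = Nat.find hx :=
        (Nat.find_eq_iff hy).2 ⟨by rw [← hxy _ (by omega)]; exact Nat.find_spec hx,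
          fun j hj => by rw [← hxy _ (by omega)]; exact Nat.find_min hx hj⟩
      rw [dif_pos hx, dif_pos hy, hfy]
      simp only [zo, drp]
      split_ifs with h1 h2
      · rfl
      · rfl
      · exact hxy _ (by omega)
    · rw [dif_pos hx]
      have h1 : zo (2 * Nat.find hx + 1) (drp (Nat.find hx + 1) x) i = false :=
        zo_lt _ (by omega)
      rw [h1]
      by_cases hy : ∃ j, y j = false
      · have hky : i < Nat.find hy := by
          by_contra hc
          push_neg at hc
          have : Nat.find hx ≤ Nat.find hy :=
            Nat.find_min' hx (by rw [hxy _ (by omega)]; exact Nat.find_spec hy)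
          omega
        rw [dif_pos hy]
        exact (zo_lt _ (by omega)).symm
      · rw [dif_neg hy]
  · rw [dif_neg hx]
    by_cases hy : ∃ j, y j = false
    · have hky : i < Nat.find hy := by
        by_contra hc
        push_neg at hc
        exact hx ⟨Nat.find hy, by rw [hxy _ (by omega)]; exact Nat.find_spec hy⟩
      rw [dif_pos hy]
      exact (zo_lt _ (by omega)).symm
    · rw [dif_neg hy]

lemma cont_g0 : Continuous g0 :=
  continuous_pi fun i => cont_of_dep (i + 1) _ (fun x y h => g0_dep i x y h)

lemma cont_hmapn (n : ℕ) : Continuous (hmapn n) := by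
  by_cases hn : n = 0
  · subst hn
    unfold hmapn
    simp only [if_pos rfl]
    exact cont_g0
  · unfold hmapn
    simp only [if_neg hn]
    refine continuous_pi fun i => cont_of_dep (i + 1) _ fun x y hxy => ?_
    simp only [zo]
    split_ifs with h1 h2
    · rfl
    · rfl
    · exact hxy _ (by omega)

theorem stmt_15 (Y : Type*) [TopologicalSpace Y] :
    UU (ℕ × (ℕ → Bool)) Y ↔ UU (ℕ → Bool) Y := by
  constructor
  · rintro ⟨V, hVo, hV⟩
    obtain ⟨w, hw, -⟩ := hV ∅ isOpen_empty
    refine ⟨{q : (ℕ → Bool) × Y | (lam w.1 w.2 q.1, q.2) ∈ V}, ?_, ?_⟩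
    · have hU : {q : (ℕ → Bool) × Y | (lam w.1 w.2 q.1, q.2) ∈ V} =
          ⋃ m, (({c : Cs | (∀ i < m, c i = false) ∧ c m = true} ×ˢ (Set.univ : Set Y)) ∩
            ((fun q : Cs × Y => (lamP w.1 w.2 m q.1, q.2)) ⁻¹' V)) := by
        ext q
        simp only [Set.mem_setOf_eq, Set.mem_iUnion, Set.mem_inter_iff, Set.mem_prod,
          Set.mem_univ, and_true, Set.mem_preimage]
        constructor
        · intro hq
          by_cases h : ∃ i, q.1 i = true
          · refine ⟨Nat.find h, ⟨fun i hi => by simpa using Nat.find_min h hi,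
              Nat.find_spec h⟩, ?_⟩
            rwa [← lam_pos w.1 w.2 h]
          · exfalso
            rw [lam_neg w.1 w.2 h] at hq
            have h2 : q.2 ∈ {y | (w, y) ∈ V} := by
              exact hq
            rw [hw] at h2
            exact h2
        · rintro ⟨m, ⟨hmin, hm⟩, hmem⟩
          have h : ∃ i, q.1 i = true := ⟨m, hm⟩
          have hfm : Nat.find h = m :=
            (Nat.find_eq_iff h).2 ⟨hm, fun k hk => by simp [hmin k hk]⟩
          rw [lam_pos w.1 w.2 h, hfm]
          exact hmem
      rw [hU]
      exact isOpen_iUnion fun m => ((isOpen_Pc m).prod isOpen_univ).inter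
        (hVo.preimage (((cont_lamP w.1 w.2 m).comp continuous_fst).prodMk continuous_snd))
    · intro W hW
      obtain ⟨p, hp, hpu⟩ := hV W hW
      refine ⟨laminv w.1 w.2 p, ?_, ?_⟩
      · show {y | (lam w.1 w.2 (laminv w.1 w.2 p), y) ∈ V} = W
        rw [lam_laminv]
        exact hp
      · intro c hc
        have h1 : lam w.1 w.2 c = p := hpu _ hc
        calc c = laminv w.1 w.2 (lam w.1 w.2 c) := (laminv_lam _ _ _).symm
          _ = laminv w.1 w.2 p := by rw [h1]
  · rintro ⟨U, hUo, hU⟩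
    refine ⟨{q : (ℕ × (ℕ → Bool)) × Y | (hmapn q.1.1 q.1.2, q.2) ∈ U}, ?_, ?_⟩
    · have hV : {q : (ℕ × (ℕ → Bool)) × Y | (hmapn q.1.1 q.1.2, q.2) ∈ U} =
          ⋃ n, ({q : (ℕ × Cs) × Y | q.1.1 = n} ∩
            ((fun q : (ℕ × Cs) × Y => (hmapn n q.1.2, q.2)) ⁻¹' U)) := by
        ext q
        simp only [Set.mem_setOf_eq, Set.mem_iUnion, Set.mem_inter_iff, Set.mem_preimage]
        constructor
        · intro hq
          exact ⟨q.1.1, rfl, hq⟩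
        · rintro ⟨n, hn, hmem⟩
          rw [hn]
          exact hmem
      rw [hV]
      refine isOpen_iUnion fun n => IsOpen.inter ?_
        (hUo.preimage (((cont_hmapn n).comp (continuous_snd.comp continuous_fst)).prodMk
          continuous_snd))
      · exact (isOpen_discrete ({n} : Set ℕ)).preimage
          ((continuous_fst.comp continuous_fst))
    · intro W hW
      obtain ⟨c, hc, hcu⟩ := hU W hW
      refine ⟨hinv c, ?_, ?_⟩
      · show {y | (hmapn (hinv c).1 (hinv c).2, y) ∈ U} = W
        rw [hmap_hinv]
        exact hc
      · intro p hp
        have h1 : hmapn p.1 p.2 = c := hcu _ hp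
        calc p = hinv (hmapn p.1 p.2) := (hinv_hmap _).symm
          _ = hinv c := by rw [h1]
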